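/- In the metric voting setting, if for all partitions of the candidates C = I ⊔ J with i* ∈ I and j* ∈ J it holds that s_{I≻j*} ≤ λ(1 − s_{i*≻J}), then SC(j*) ≤ (1 + 2λ)·SC(i*). -/

import Mathlib

open MeasureTheory Set Filter
open scoped ENNReal

/-- Discrete layer-cake comparison: if for every threshold `t > 0` the number of
points where `g ≥ t` is at most `lam` times the number of points where `h ≥ t`,
then `∑ g ≤ lam * ∑ h`. -/
lemma layer_sum {V : Type*} [Fintype V] (g h : V → ℝ) (hg : ∀ v, 0 ≤ g v) (hh : ∀ v, 0 ≤ h v)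
    (lam : ℝ) (hlam : 0 ≤ lam)
    (H : ∀ t : ℝ, 0 < t →
      ((Finset.univ.filter (fun v => t ≤ g v)).card : ℝ) ≤
        lam * ((Finset.univ.filter (fun v => t ≤ h v)).card : ℝ)) :
    ∑ v, g v ≤ lam * ∑ v, h v := by
  classical
  letI : MeasurableSpace V := ⊤
  haveI : MeasurableSingletonClass V := ⟨fun _ => trivial⟩
  have mble : ∀ f : V → ℝ, Measurable f := fun f s _ => trivial
  have key : ∀ f : V → ℝ, (∀ v, 0 ≤ f v) →
      ENNReal.ofReal (∑ v, f v) = ∫⁻ t in Ioi (0:ℝ), Measure.count {v : V | t ≤ f v} := by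
    intro f hf
    rw [ENNReal.ofReal_sum_of_nonneg (fun v _ => hf v)]
    rw [← tsum_fintype (L := SummationFilter.unconditional _), ← lintegral_count]
    exact lintegral_eq_lintegral_meas_le Measure.count (Eventually.of_forall hf)
      ((mble f).aemeasurable)
  have cnt : ∀ f : V → ℝ, ∀ t : ℝ, Measure.count {v : V | t ≤ f v}
      = ((Finset.univ.filter (fun v => t ≤ f v)).card : ℝ≥0∞) := by
    intro f t
    rw [show {v : V | t ≤ f v} = ↑(Finset.univ.filter (fun v => t ≤ f v)) by
      ext v; simp]
    exact Measure.count_apply_finset _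
  have step : ∫⁻ t in Ioi (0:ℝ), Measure.count {v : V | t ≤ g v}
      ≤ ∫⁻ t in Ioi (0:ℝ), ENNReal.ofReal lam * Measure.count {v : V | t ≤ h v} := by
    refine lintegral_mono_ae ?_
    refine (ae_restrict_iff' measurableSet_Ioi).2 (Eventually.of_forall fun t ht => ?_)
    rw [cnt, cnt]
    calc ((Finset.univ.filter (fun v => t ≤ g v)).card : ℝ≥0∞)
        = ENNReal.ofReal ((Finset.univ.filter (fun v => t ≤ g v)).card : ℝ) := by
          simp
      _ ≤ ENNReal.ofReal (lam * ((Finset.univ.filter (fun v => t ≤ h v)).card : ℝ)) :=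
          ENNReal.ofReal_le_ofReal (H t ht)
      _ = ENNReal.ofReal lam * ((Finset.univ.filter (fun v => t ≤ h v)).card : ℝ≥0∞) := by
          rw [ENNReal.ofReal_mul hlam]; simp
  rw [lintegral_const_mul' _ _ ENNReal.ofReal_ne_top] at step
  have := (key g hg) ▸ (key h hh) ▸ step
  have h2 : ENNReal.ofReal (∑ v, g v) ≤ ENNReal.ofReal (lam * ∑ v, h v) := by
    rwa [← ENNReal.ofReal_mul hlam] at this
  exact (ENNReal.ofReal_le_ofReal_iff
    (mul_nonneg hlam (Finset.sum_nonneg fun v _ => hh v))).1 h2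

/-- The LP sufficient condition: in the metric voting setting, if for all
partitions `C = I ⊔ J` with `i* ∈ I` and `j* ∈ J` we have
`s_{I≻j*} ≤ λ(1 − s_{i*≻J})`, then `SC(j*) ≤ (1 + 2λ)·SC(i*)`. -/
theorem stmt12 {X V C : Type*} [PseudoMetricSpace X] [Fintype V] [Nonempty V] [Fintype C] [DecidableEq C]
    (vloc : V → X) (cloc : C → X)
    (pref : V → C → C → Prop) [∀ v, DecidableRel (pref v)]
    (htrans : ∀ v, Transitive (pref v))
    (hirr : ∀ v a b, pref v a b → ¬ pref v b a)
    (htotal : ∀ v (a b : C), a ≠ b → pref v a b ∨ pref v b a)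
    (hconsist : ∀ v a b, dist (vloc v) (cloc a) < dist (vloc v) (cloc b) → pref v a b)
    (sIto : Finset C → C → ℝ)
    (hsIto : ∀ I j, sIto I j =
      ((Finset.univ.filter fun v => ∀ i ∈ I, pref v i j).card : ℝ) / (Fintype.card V))
    (stoJ : C → Finset C → ℝ)
    (hstoJ : ∀ i J, stoJ i J =
      ((Finset.univ.filter fun v => ∀ j ∈ J, pref v i j).card : ℝ) / (Fintype.card V))
    (lam : ℝ) (hlam : 0 ≤ lam)
    (istar jstar : C)
    (h : ∀ I J : Finset C, I ∪ J = Finset.univ → Disjoint I J →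
      istar ∈ I → jstar ∈ J → sIto I jstar ≤ lam * (1 - stoJ istar J)) :
    ∑ v : V, dist (vloc v) (cloc jstar) ≤
      (1 + 2*lam) * ∑ v : V, dist (vloc v) (cloc istar) := by
  classical
  have hn : (0:ℝ) < (Fintype.card V : ℝ) := by exact_mod_cast Fintype.card_pos
  -- preference implies weak closeness
  have pref_dist : ∀ v a b, pref v a b →
      dist (vloc v) (cloc a) ≤ dist (vloc v) (cloc b) := by
    intro v a b hab
    by_contra hlt
    push_neg at hlt
    exact hirr v b a (hconsist v b a hlt) hab
  set dI : V → ℝ := fun v => dist (vloc v) (cloc istar) with hdIdef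
  set dJ : V → ℝ := fun v => dist (vloc v) (cloc jstar) with hdJdef
  set D : ℝ := dist (cloc istar) (cloc jstar) with hDdef
  set g : V → ℝ := fun v => max (dJ v - dI v) 0 with hgdef
  -- the counting inequality at each threshold
  have H : ∀ t : ℝ, 0 < t →
      ((Finset.univ.filter (fun v => t ≤ g v)).card : ℝ) ≤
        lam * ((Finset.univ.filter (fun v : V => t ≤ 2 * dI v)).card : ℝ) := by
    intro t ht
    have hgt : ∀ v, t ≤ g v → t ≤ dJ v - dI v := by
      intro v hv
      rcases le_max_iff.1 hv with h1 | h1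
      · exact h1
      · linarith
    by_cases hD : D < t
    · -- the left set is empty
      have : (Finset.univ.filter (fun v => t ≤ g v)) = ∅ := by
        refine Finset.filter_false_of_mem ?_
        intro v _
        intro hv
        have h1 := hgt v hv
        have h2 : dJ v ≤ dI v + D := dist_triangle (vloc v) (cloc istar) (cloc jstar)
        linarith
      rw [this]
      simp only [Finset.card_empty, Nat.cast_zero]
      positivity
    · push_neg at hD
      set I : Finset C := Finset.univ.filter (fun c => dist (cloc istar) (cloc c) < t) with hI
      set J : Finset C := Finset.univ.filter (fun c => ¬ dist (cloc istar) (cloc c) < t) with hJ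
      have hiI : istar ∈ I := by
        simp only [hI, Finset.mem_filter, Finset.mem_univ, true_and]
        simpa using ht
      have hjJ : jstar ∈ J := by
        simp only [hJ, Finset.mem_filter, Finset.mem_univ, true_and]
        exact not_lt.2 hD
      have hIJ := h I J (Finset.filter_union_filter_not_eq _ _)
        (Finset.disjoint_filter_filter_not _ _ _) hiI hjJ
      rw [hsIto, hstoJ] at hIJ
      -- first subset: {t ≤ g} ⊆ {v prefers all of I to jstar}
      have sub1 : (Finset.univ.filter (fun v => t ≤ g v)) ⊆
          (Finset.univ.filter (fun v => ∀ i ∈ I, pref v i jstar)) := by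
        intro v hv
        simp only [Finset.mem_filter, Finset.mem_univ, true_and] at hv ⊢
        intro c hc
        simp only [hI, Finset.mem_filter, Finset.mem_univ, true_and] at hc
        have hne : c ≠ jstar := by
          intro hcj
          rw [hcj] at hc
          exact absurd hc (not_lt.2 hD)
        rcases htotal v c jstar hne with hp | hp
        · exact hp
        · exfalso
          have h1 : dJ v ≤ dist (vloc v) (cloc c) := pref_dist v jstar c hp
          have h2 : dist (vloc v) (cloc c) ≤ dI v + dist (cloc istar) (cloc c) :=
            dist_triangle (vloc v) (cloc istar) (cloc c)
          have h3 := hgt v hv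
          linarith
      -- second subset: {v not preferring istar to all of J} ⊆ {t ≤ 2 dI}
      have sub2 : (Finset.univ.filter (fun v => ¬ ∀ j ∈ J, pref v istar j)) ⊆
          (Finset.univ.filter (fun v : V => t ≤ 2 * dI v)) := by
        intro v hv
        simp only [Finset.mem_filter, Finset.mem_univ, true_and] at hv ⊢
        push_neg at hv
        obtain ⟨j, hjmem, hnp⟩ := hv
        simp only [hJ, Finset.mem_filter, Finset.mem_univ, true_and, not_lt] at hjmem
        have hne : istar ≠ j := by
          intro hij
          rw [← hij] at hjmem
          simp only [dist_self] at hjmem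
          linarith
        have hp : pref v j istar := (htotal v istar j hne).resolve_left hnp
        have h1 : dist (vloc v) (cloc j) ≤ dI v := pref_dist v j istar hp
        have h2 : dist (cloc istar) (cloc j) ≤ dI v + dist (vloc v) (cloc j) :=
          dist_triangle_left (cloc istar) (cloc j) (vloc v)
        linarith
      -- combine with the LP inequality
      have hcardsum : ((Finset.univ.filter (fun v => ∀ j ∈ J, pref v istar j)).card : ℝ)
          + ((Finset.univ.filter (fun v => ¬ ∀ j ∈ J, pref v istar j)).card : ℝ)
          = (Fintype.card V : ℝ) := by
        rw [← Nat.cast_add]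
        norm_cast
        rw [Finset.card_filter_add_card_filter_not]
        exact (Finset.card_univ)
      have e1 : (1 - ((Finset.univ.filter (fun v => ∀ j ∈ J, pref v istar j)).card : ℝ)
            / (Fintype.card V : ℝ))
          = ((Finset.univ.filter (fun v => ¬ ∀ j ∈ J, pref v istar j)).card : ℝ)
            / (Fintype.card V : ℝ) := by
        rw [eq_div_iff hn.ne', sub_mul, one_mul, div_mul_cancel₀ _ hn.ne']
        linarith
      rw [e1] at hIJ
      have h4 := mul_le_mul_of_nonneg_right hIJ hn.le
      rw [div_mul_cancel₀ _ hn.ne', mul_assoc, div_mul_cancel₀ _ hn.ne'] at h4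
      calc ((Finset.univ.filter (fun v => t ≤ g v)).card : ℝ)
          ≤ ((Finset.univ.filter (fun v => ∀ i ∈ I, pref v i jstar)).card : ℝ) := by
            exact_mod_cast Finset.card_le_card sub1
        _ ≤ lam * ((Finset.univ.filter (fun v => ¬ ∀ j ∈ J, pref v istar j)).card : ℝ) := h4
        _ ≤ lam * ((Finset.univ.filter (fun v : V => t ≤ 2 * dI v)).card : ℝ) := by
            apply mul_le_mul_of_nonneg_left _ hlam
            exact_mod_cast Finset.card_le_card sub2
  have main := layer_sum g (fun v => 2 * dI v) (fun v => le_max_right _ _)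
    (fun v => by positivity) lam hlam H
  have hsum2 : ∑ v : V, (2 * dI v) = 2 * ∑ v : V, dI v := by
    rw [Finset.mul_sum]
  have hb : ∀ v : V, dJ v ≤ dI v + g v := by
    intro v
    have : dJ v - dI v ≤ g v := le_max_left _ _
    linarith
  calc ∑ v : V, dJ v ≤ ∑ v : V, (dI v + g v) := Finset.sum_le_sum fun v _ => hb v
    _ = ∑ v : V, dI v + ∑ v : V, g v := Finset.sum_add_distrib
    _ ≤ ∑ v : V, dI v + lam * (2 * ∑ v : V, dI v) := by
        rw [← hsum2]; linarith [main]
    _ = (1 + 2*lam) * ∑ v : V, dI v := by ring
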